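/- Let f and g be positive, twice continuously differentiable functions on a convex open set D ⊆ ℝᴺ, and let −1 < α < 0. If f^α and g^α are both concave on D, then (f+g)^α is concave on D. -/

import Mathlib

open Real Set

private lemma rpow_two_point {p u v lam mu : ℝ} (hp : p < 0) (hu : 0 < u) (hv : 0 < v)
    (hl : 0 < lam) (hm : 0 < mu) (hlm : lam + mu = 1) :
    (lam * u + mu * v) ^ p ≤ lam * u ^ p + mu * v ^ p := by
  have hs : 0 < lam * u + mu * v := by positivity
  have hlog : lam * Real.log u + mu * Real.log v ≤ Real.log (lam * u + mu * v) := by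
    have := strictConcaveOn_log_Ioi.concaveOn.2 (Set.mem_Ioi.2 hu) (Set.mem_Ioi.2 hv)
      hl.le hm.le hlm
    simpa using this
  have h1 : p * Real.log (lam * u + mu * v) ≤ lam * (p * Real.log u) + mu * (p * Real.log v) := by
    nlinarith [hlog]
  calc (lam * u + mu * v) ^ p = Real.exp (p * Real.log (lam * u + mu * v)) := by
        rw [Real.rpow_def_of_pos hs, mul_comm]
    _ ≤ Real.exp (lam * (p * Real.log u) + mu * (p * Real.log v)) := Real.exp_le_exp.2 h1
    _ ≤ lam * Real.exp (p * Real.log u) + mu * Real.exp (p * Real.log v) := by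
        have := convexOn_exp.2 (Set.mem_univ (p * Real.log u)) (Set.mem_univ (p * Real.log v))
          hl.le hm.le hlm
        simpa [smul_eq_mul] using this
    _ = lam * u ^ p + mu * v ^ p := by
        rw [Real.rpow_def_of_pos hu, Real.rpow_def_of_pos hv, mul_comm (Real.log u),
          mul_comm (Real.log v)]

private lemma rpow_add_le_aux {p u v lam mu : ℝ} (hp : p < 0) (hu : 0 < u) (hv : 0 < v)
    (hl : 0 < lam) (hm : 0 < mu) (hlm : lam + mu = 1) :
    (u + v) ^ p ≤ lam ^ (1 - p) * u ^ p + mu ^ (1 - p) * v ^ p := by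
  have h := rpow_two_point hp (div_pos hu hl) (div_pos hv hm) hl hm hlm
  have e1 : lam * (u / lam) + mu * (v / mu) = u + v := by field_simp
  rw [e1] at h
  have hlp : (0:ℝ) < lam ^ p := Real.rpow_pos_of_pos hl p
  have hmp : (0:ℝ) < mu ^ p := Real.rpow_pos_of_pos hm p
  have e2 : lam * (u / lam) ^ p = lam ^ (1 - p) * u ^ p := by
    rw [Real.div_rpow hu.le hl.le, Real.rpow_sub hl, Real.rpow_one]
    field_simp
  have e3 : mu * (v / mu) ^ p = mu ^ (1 - p) * v ^ p := by
    rw [Real.div_rpow hv.le hm.le, Real.rpow_sub hm, Real.rpow_one]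
    field_simp
  rw [e2, e3] at h
  exact h

private lemma rpow_superadd {p a b c d : ℝ} (hp : p < 0) (ha : 0 < a) (hb : 0 < b)
    (hc : 0 < c) (hd : 0 < d) :
    (a ^ p + b ^ p) ^ (1 / p) + (c ^ p + d ^ p) ^ (1 / p)
      ≤ ((a + c) ^ p + (b + d) ^ p) ^ (1 / p) := by
  have hpne : p ≠ 0 := hp.ne
  have hab : (0:ℝ) < a ^ p + b ^ p := by positivity
  have hcd : (0:ℝ) < c ^ p + d ^ p := by positivity
  set A := (a ^ p + b ^ p) ^ (1 / p) with hA
  set C := (c ^ p + d ^ p) ^ (1 / p) with hC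
  have hA0 : 0 < A := Real.rpow_pos_of_pos hab _
  have hC0 : 0 < C := Real.rpow_pos_of_pos hcd _
  have hAC : 0 < A + C := by linarith
  have hAp : A ^ p = a ^ p + b ^ p := by
    rw [hA, one_div, Real.rpow_inv_rpow hab.le hpne]
  have hCp : C ^ p = c ^ p + d ^ p := by
    rw [hC, one_div, Real.rpow_inv_rpow hcd.le hpne]
  set lam := A / (A + C) with hlam
  set mu := C / (A + C) with hmu
  have hl : 0 < lam := div_pos hA0 hAC
  have hm : 0 < mu := div_pos hC0 hAC
  have hlm : lam + mu = 1 := by rw [hlam, hmu]; field_simp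
  have h1 := rpow_add_le_aux hp ha hc hl hm hlm
  have h2 := rpow_add_le_aux hp hb hd hl hm hlm
  have hsum : (a + c) ^ p + (b + d) ^ p
      ≤ lam ^ (1 - p) * A ^ p + mu ^ (1 - p) * C ^ p := by
    rw [hAp, hCp]; nlinarith [h1, h2]
  have hACp : 0 < (A + C) ^ (1 - p) := Real.rpow_pos_of_pos hAC _
  have e1 : lam ^ (1 - p) * A ^ p = A / (A + C) ^ (1 - p) := by
    rw [hlam, Real.div_rpow hA0.le hAC.le]
    rw [div_mul_eq_mul_div, ← Real.rpow_add hA0]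
    norm_num
  have e2 : mu ^ (1 - p) * C ^ p = C / (A + C) ^ (1 - p) := by
    rw [hmu, Real.div_rpow hC0.le hAC.le]
    rw [div_mul_eq_mul_div, ← Real.rpow_add hC0]
    norm_num
  have e3 : lam ^ (1 - p) * A ^ p + mu ^ (1 - p) * C ^ p = (A + C) ^ p := by
    rw [e1, e2, ← add_div, div_eq_iff hACp.ne', ← Real.rpow_add hAC,
      show p + (1 - p) = 1 by ring, Real.rpow_one]
  have hkey : (a + c) ^ p + (b + d) ^ p ≤ (A + C) ^ p := by
    calc (a + c) ^ p + (b + d) ^ p ≤ _ := hsum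
      _ = (A + C) ^ p := e3
  have hpos : (0:ℝ) < (a + c) ^ p + (b + d) ^ p := by positivity
  have := Real.rpow_le_rpow_of_nonpos hpos hkey (by rw [one_div]; exact (inv_neg''.2 hp).le :
    (1 / p : ℝ) ≤ 0)
  calc A + C = ((A + C) ^ p) ^ (1 / p) := by
        rw [one_div, Real.rpow_rpow_inv hAC.le hpne]
    _ ≤ ((a + c) ^ p + (b + d) ^ p) ^ (1 / p) := this

theorem sum_preserves_alpha_concavity
    (N : ℕ) (D : Set (EuclideanSpace ℝ (Fin N)))
    (hD_conv : Convex ℝ D) (hD_open : IsOpen D)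
    (f g : EuclideanSpace ℝ (Fin N) → ℝ)
    (hf_pos : ∀ x ∈ D, 0 < f x) (hg_pos : ∀ x ∈ D, 0 < g x)
    (hf_smooth : ContDiffOn ℝ 2 f D) (hg_smooth : ContDiffOn ℝ 2 g D)
    (α : ℝ) (hα : α ∈ Set.Ioo (-1 : ℝ) 0)
    (hf_conc : ConcaveOn ℝ D (fun x => f x ^ α))
    (hg_conc : ConcaveOn ℝ D (fun x => g x ^ α)) :
    ConcaveOn ℝ D (fun x => (f x + g x) ^ α) := by
  obtain ⟨hα1, hα0⟩ := hα
  have hαne : α ≠ 0 := ne_of_lt hα0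
  have hp : (1 : ℝ) / α < 0 := one_div_neg.2 hα0
  refine ⟨hD_conv, ?_⟩
  intro x hx y hy a b ha hb hab
  rcases eq_or_lt_of_le ha with h0 | ha'
  · have hb1 : b = 1 := by linarith
    simp [← h0, hb1]
  rcases eq_or_lt_of_le hb with h0 | hb'
  · have ha1 : a = 1 := by linarith
    simp [← h0, ha1]
  have hz : a • x + b • y ∈ D := hD_conv hx hy ha hb hab
  have hfx : 0 < f x := hf_pos x hx
  have hfy : 0 < f y := hf_pos y hy
  have hgx : 0 < g x := hg_pos x hx
  have hgy : 0 < g y := hg_pos y hy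
  have hfz : 0 < f (a • x + b • y) := hf_pos _ hz
  have hgz : 0 < g (a • x + b • y) := hg_pos _ hz
  have hfc := hf_conc.2 hx hy ha hb hab
  have hgc := hg_conc.2 hx hy ha hb hab
  simp only [smul_eq_mul] at hfc hgc ⊢
  set S := a * f x ^ α + b * f y ^ α with hS
  set T := a * g x ^ α + b * g y ^ α with hT
  have hS0 : 0 < S := by
    have := Real.rpow_pos_of_pos hfx α
    have := Real.rpow_pos_of_pos hfy α
    positivity
  have hT0 : 0 < T := by
    have := Real.rpow_pos_of_pos hgx α
    have := Real.rpow_pos_of_pos hgy α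
    positivity
  -- f z ≤ S ^ (1/α), g z ≤ T ^ (1/α)
  have h1 : f (a • x + b • y) ≤ S ^ (1 / α) := by
    have h := Real.rpow_le_rpow_of_nonpos hS0 hfc (by rw [one_div]; exact (inv_neg''.2 hα0).le :
      (1 / α : ℝ) ≤ 0)
    rw [one_div, Real.rpow_rpow_inv hfz.le hαne] at h
    rwa [one_div]
  have h2 : g (a • x + b • y) ≤ T ^ (1 / α) := by
    have h := Real.rpow_le_rpow_of_nonpos hT0 hgc (by rw [one_div]; exact (inv_neg''.2 hα0).le :
      (1 / α : ℝ) ≤ 0)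
    rw [one_div, Real.rpow_rpow_inv hgz.le hαne] at h
    rwa [one_div]
  have step3 : (S ^ (1 / α) + T ^ (1 / α)) ^ α
      ≤ (f (a • x + b • y) + g (a • x + b • y)) ^ α :=
    Real.rpow_le_rpow_of_nonpos (by positivity) (add_le_add h1 h2) hα0.le
  -- superadditivity step
  have hfxα := Real.rpow_pos_of_pos hfx α
  have hfyα := Real.rpow_pos_of_pos hfy α
  have hgxα := Real.rpow_pos_of_pos hgx α
  have hgyα := Real.rpow_pos_of_pos hgy α
  have key := rpow_superadd (p := 1 / α) hp
    (mul_pos ha' hfxα) (mul_pos ha' hgxα) (mul_pos hb' hfyα) (mul_pos hb' hgyα)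
  rw [one_div_one_div] at key
  have e1 : ((a * f x ^ α) ^ (1 / α) + (a * g x ^ α) ^ (1 / α)) ^ α
      = a * (f x + g x) ^ α := by
    rw [one_div, Real.mul_rpow ha'.le hfxα.le, Real.mul_rpow ha'.le hgxα.le,
      Real.rpow_rpow_inv hfx.le hαne, Real.rpow_rpow_inv hgx.le hαne, ← mul_add,
      Real.mul_rpow (by positivity) (by positivity), Real.rpow_inv_rpow ha'.le hαne]
  have e2 : ((b * f y ^ α) ^ (1 / α) + (b * g y ^ α) ^ (1 / α)) ^ α
      = b * (f y + g y) ^ α := by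
    rw [one_div, Real.mul_rpow hb'.le hfyα.le, Real.mul_rpow hb'.le hgyα.le,
      Real.rpow_rpow_inv hfy.le hαne, Real.rpow_rpow_inv hgy.le hαne, ← mul_add,
      Real.mul_rpow (by positivity) (by positivity), Real.rpow_inv_rpow hb'.le hαne]
  rw [e1, e2] at key
  calc a * (f x + g x) ^ α + b * (f y + g y) ^ α
      ≤ ((a * f x ^ α + b * f y ^ α) ^ (1 / α)
          + (a * g x ^ α + b * g y ^ α) ^ (1 / α)) ^ α := key
    _ = (S ^ (1 / α) + T ^ (1 / α)) ^ α := by rw [hS, hT]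
    _ ≤ _ := step3
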